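/- Let Γ be a finite simple graph on vertex set V, let v ∈ V, and let A, B ⊆ V satisfy A ∪ B = V and A ∩ B = {v}, such that every edge of Γ has both endpoints in A or both endpoints in B (Γ is the wedge of Γ₁ := Γ|_A and Γ₂ := Γ|_B at v). Assume Γ₁ and Γ₂ are connected, with |A| = a ≥ 1 and |B| = b ≥ 1. Then Σ_{k=0}^{a+b−2} f_k(Z_Γ)·q^k = (Σ_{k=0}^{a−1} f_k(Z_{Γ₁})·q^k) · (Σ_{k=0}^{b−1} f_k(Z_{Γ₂})·q^k), as an identity in ℤ[q]. -/

import Mathlib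

open Polynomial
set_option linter.unusedSectionVars false
set_option linter.unusedVariables false
open scoped Classical

/-- The graphical zonotope of `G`, as the Minkowski sum over the edges `{i,j}` of `G`
of the segments `[-(e_i - e_j), e_i - e_j]`, described via antisymmetric coefficient
functions supported on edges. -/
def graphicalZonotope {V : Type} [Fintype V] [DecidableEq V] (G : SimpleGraph V) :
    Set (V → ℝ) :=
  { x | ∃ c : V → V → ℝ, (∀ u v, c u v = - c v u) ∧ (∀ u v, ¬ G.Adj u v → c u v = 0) ∧
      (∀ u v, |c u v| ≤ 1) ∧ x = fun w => ∑ u, c w u }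

/-- `faceCount G k` is the number of nonempty exposed faces of the graphical zonotope of `G`
whose affine span has dimension `k`. -/
noncomputable def faceCount {V : Type} [Fintype V] [DecidableEq V] (G : SimpleGraph V)
    (k : ℕ) : ℕ :=
  Nat.card { F : Set (V → ℝ) // F.Nonempty ∧ IsExposed ℝ (graphicalZonotope G) F ∧
      Module.finrank ℝ (affineSpan ℝ F).direction = k }

/-- The number of acyclic orientations of `G`. -/
noncomputable def acyclicOrientationCount {V : Type} (G : SimpleGraph V) : ℕ :=
  Nat.card { r : V → V → Prop // (∀ u v, r u v → G.Adj u v) ∧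
      (∀ u v, G.Adj u v → Xor' (r u v) (r v u)) ∧ (∀ v, ¬ Relation.TransGen r v v) }

/-- rank of the induced subgraph on `s` : `|s| - #components`. -/
noncomputable def inducedRank {V : Type} (G : SimpleGraph V) (s : Set V) : ℕ :=
  Nat.card s - Nat.card (G.induce s).ConnectedComponent

/-- The `q`-analog of the chromatic polynomial evaluated at `d` colors, an element of `ℤ[q]`. -/
noncomputable def chromQ {V : Type} [Fintype V] [DecidableEq V] (G : SimpleGraph V) (d : ℕ) : Polynomial ℤ :=
  ∑ f : V → Fin d, (X : Polynomial ℤ) ^ (∑ i : Fin d, inducedRank G (f ⁻¹' {i}))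

/-- `H` is (the spanning subgraph determined by) a flat of `G`. -/
def IsFlatOf {V : Type} (G H : SimpleGraph V) : Prop :=
  H ≤ G ∧ ∀ u v, G.Adj u v → H.Reachable u v → H.Adj u v

/-- The rank of a spanning subgraph `H`: `|V| - c(H)`. -/
noncomputable def flatRank {V : Type} [Fintype V] (H : SimpleGraph V) : ℕ :=
  Fintype.card V - Nat.card H.ConnectedComponent

/-- The contraction `G/H`: vertices are the connected components of `H`, two distinct
components being adjacent iff some edge of `G` joins them. -/
def contractFlat {V : Type} (G H : SimpleGraph V) : SimpleGraph H.ConnectedComponent where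
  Adj C D := C ≠ D ∧ ∃ u v, G.Adj u v ∧ H.connectedComponentMk u = C ∧
      H.connectedComponentMk v = D
  symm := ⟨by
    rintro C D ⟨hne, u, v, hadj, hu, hv⟩
    exact ⟨hne.symm, v, u, hadj.symm, hv, hu⟩⟩
  loopless := ⟨by rintro C ⟨hne, -⟩; exact hne rfl⟩

namespace ZonoWedge

variable {V : Type} [Fintype V] [DecidableEq V]

/-- point of the zonotope from a coefficient matrix -/
def zpt (c : V → V → ℝ) : V → ℝ := fun w => ∑ u, c w u

/-- the zonotope constraints on `c` -/
def IsZW (G : SimpleGraph V) (c : V → V → ℝ) : Prop :=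
  (∀ u v, c u v = - c v u) ∧ (∀ u v, ¬ G.Adj u v → c u v = 0) ∧ (∀ u v, |c u v| ≤ 1)

lemma mem_gz {G : SimpleGraph V} {x : V → ℝ} :
    x ∈ graphicalZonotope G ↔ ∃ c, IsZW G c ∧ x = zpt c := by
  constructor
  · rintro ⟨c, h1, h2, h3, h4⟩; exact ⟨c, ⟨h1, h2, h3⟩, h4⟩
  · rintro ⟨c, ⟨h1, h2, h3⟩, h4⟩; exact ⟨c, h1, h2, h3, h4⟩

lemma gz_nonempty (G : SimpleGraph V) : (graphicalZonotope G).Nonempty := by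
  refine ⟨zpt (fun _ _ => 0), mem_gz.2 ⟨fun _ _ => 0, ⟨?_, ?_, ?_⟩, rfl⟩⟩ <;> simp

/-- total coordinate sum of a zonotope point is zero -/
lemma sum_zpt_eq_zero {c : V → V → ℝ} (hanti : ∀ u w, c u w = - c w u) :
    ∑ w, zpt c w = 0 := by
  have h : ∑ w, ∑ u, c w u = ∑ u, ∑ w, c w u := Finset.sum_comm
  have h2 : ∑ u, ∑ w, c w u = - ∑ w, ∑ u, c w u := by
    rw [← Finset.sum_neg_distrib]
    refine Finset.sum_congr rfl fun u _ => ?_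
    rw [← Finset.sum_neg_distrib]
    exact Finset.sum_congr rfl fun w _ => by rw [hanti w u]
  have : ∑ w, ∑ u, c w u = 0 := by linarith [h, h2]
  simpa [zpt] using this

/-- the dot-product continuous linear functional -/
noncomputable def dotL (y : V → ℝ) : (V → ℝ) →L[ℝ] ℝ :=
  LinearMap.toContinuousLinearMap
    { toFun := fun x => ∑ w, y w * x w
      map_add' := by intros; simp [mul_add, Finset.sum_add_distrib]
      map_smul' := by
        intros c x
        simp only [Pi.smul_apply, smul_eq_mul, RingHom.id_apply, Finset.mul_sum]
        exact Finset.sum_congr rfl fun w _ => by ring }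

lemma dotL_apply (y x : V → ℝ) : dotL y x = ∑ w, y w * x w := rfl

lemma two_dotL (y : V → ℝ) (c : V → V → ℝ) (hanti : ∀ u w, c u w = - c w u) :
    2 * dotL y (zpt c) = ∑ w, ∑ u, c w u * (y w - y u) := by
  have key : ∑ w, ∑ u, c w u * y u = - ∑ w, ∑ u, c w u * y w := by
    rw [Finset.sum_comm, ← Finset.sum_neg_distrib]
    refine Finset.sum_congr rfl fun u _ => ?_
    rw [← Finset.sum_neg_distrib]
    refine Finset.sum_congr rfl fun w _ => ?_
    rw [hanti w u]; ring
  have expand : ∑ w, ∑ u, c w u * (y w - y u)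
      = (∑ w, ∑ u, c w u * y w) - ∑ w, ∑ u, c w u * y u := by
    simp [mul_sub, Finset.sum_sub_distrib]
  rw [expand, key, dotL_apply]
  simp only [zpt, Finset.mul_sum]
  rw [sub_neg_eq_add, ← two_mul, Finset.mul_sum]
  refine Finset.sum_congr rfl fun w _ => ?_
  rw [Finset.mul_sum]
  exact Finset.sum_congr rfl fun u _ => by ring

lemma clm_eq_dotL (ℓ : (V → ℝ) →L[ℝ] ℝ) (x : V → ℝ) :
    ℓ x = dotL (fun w => ℓ (Pi.single w 1)) x := by
  conv_lhs => rw [← Finset.univ_sum_single x]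
  rw [map_sum, dotL_apply]
  refine Finset.sum_congr rfl fun w _ => ?_
  have : (Pi.single w (x w) : V → ℝ) = x w • (Pi.single w 1 : V → ℝ) := by
    ext u
    by_cases h : u = w <;> simp [Pi.single_apply, h]
  rw [this, map_smul, smul_eq_mul, mul_comm]

/-- faces described by sign patterns -/
def sigFace (G : SimpleGraph V) (s : V → V → ℝ) : Set (V → ℝ) :=
  {x | ∃ c, IsZW G c ∧ (∀ w u, s w u ≠ 0 → c w u = s w u) ∧ x = zpt c}

noncomputable def sgn (G : SimpleGraph V) (y : V → ℝ) : V → V → ℝ :=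
  fun w u => if G.Adj w u then Real.sign (y w - y u) else 0

noncomputable def bndSum (G : SimpleGraph V) (y : V → ℝ) : ℝ :=
  ∑ w, ∑ u, if G.Adj w u then |y w - y u| else 0

lemma term_le {G : SimpleGraph V} {c : V → V → ℝ} (hc : IsZW G c) (y : V → ℝ) (w u : V) :
    c w u * (y w - y u) ≤ (if G.Adj w u then |y w - y u| else 0) := by
  by_cases hadj : G.Adj w u
  · rw [if_pos hadj]
    calc c w u * (y w - y u) ≤ |c w u * (y w - y u)| := le_abs_self _
      _ = |c w u| * |y w - y u| := abs_mul _ _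
      _ ≤ 1 * |y w - y u| := by
          exact mul_le_mul_of_nonneg_right (hc.2.2 w u) (abs_nonneg _)
      _ = |y w - y u| := one_mul _
  · rw [if_neg hadj, hc.2.1 w u hadj, zero_mul]

lemma le_bnd {G : SimpleGraph V} {c : V → V → ℝ} (hc : IsZW G c) (y : V → ℝ) :
    2 * dotL y (zpt c) ≤ bndSum G y := by
  rw [two_dotL y c hc.1]
  exact Finset.sum_le_sum fun w _ => Finset.sum_le_sum fun u _ => term_le hc y w u

lemma eq_bnd_iff {G : SimpleGraph V} {c : V → V → ℝ} (hc : IsZW G c) (y : V → ℝ) :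
    2 * dotL y (zpt c) = bndSum G y ↔
      ∀ w u, c w u * (y w - y u) = (if G.Adj w u then |y w - y u| else 0) := by
  rw [two_dotL y c hc.1, bndSum,
    Finset.sum_eq_sum_iff_of_le
      (fun w _ => Finset.sum_le_sum fun u _ => term_le hc y w u)]
  constructor
  · intro h w u
    exact (Finset.sum_eq_sum_iff_of_le (fun u _ => term_le hc y w u)).1
      (h w (Finset.mem_univ w)) u (Finset.mem_univ u)
  · intro h w _
    exact Finset.sum_congr rfl fun u _ => h w u

lemma isZW_sgn (G : SimpleGraph V) (y : V → ℝ) : IsZW G (sgn G y) := by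
  refine ⟨fun u w => ?_, fun u w h => by simp [sgn, h], fun u w => ?_⟩
  · by_cases hadj : G.Adj u w
    · simp only [sgn, if_pos hadj, if_pos hadj.symm]
      rw [show y u - y w = -(y w - y u) by ring, Real.sign_neg]
    · have h2 : ¬ G.Adj w u := fun h => hadj h.symm
      simp [sgn, hadj, h2]
  · by_cases hadj : G.Adj u w
    · simp only [sgn, if_pos hadj]
      rcases Real.sign_apply_eq (y u - y w) with h | h | h <;> rw [h] <;> norm_num
    · simp [sgn, hadj]

lemma sgn_mul (G : SimpleGraph V) (y : V → ℝ) (w u : V) :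
    sgn G y w u * (y w - y u) = (if G.Adj w u then |y w - y u| else 0) := by
  by_cases hadj : G.Adj w u
  · simp only [sgn, if_pos hadj]
    rcases lt_trichotomy (y w - y u) 0 with h | h | h
    · rw [Real.sign_of_neg h, abs_of_neg h]; ring
    · rw [h, Real.sign_zero, abs_zero, mul_zero]
    · rw [Real.sign_of_pos h, abs_of_pos h, one_mul]
  · simp [sgn, hadj]

lemma argmax_eq_sigFace (G : SimpleGraph V) (y : V → ℝ) :
    {x ∈ graphicalZonotope G | ∀ z ∈ graphicalZonotope G, dotL y z ≤ dotL y x}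
      = sigFace G (sgn G y) := by
  have hstarZ : zpt (sgn G y) ∈ graphicalZonotope G := mem_gz.2 ⟨_, isZW_sgn G y, rfl⟩
  have hstar : 2 * dotL y (zpt (sgn G y)) = bndSum G y :=
    (eq_bnd_iff (isZW_sgn G y) y).2 (sgn_mul G y)
  ext x
  constructor
  · rintro ⟨hxZ, hmax⟩
    obtain ⟨c, hc, rfl⟩ := mem_gz.1 hxZ
    have h1 : dotL y (zpt (sgn G y)) ≤ dotL y (zpt c) := hmax _ hstarZ
    have heq : 2 * dotL y (zpt c) = bndSum G y :=
      le_antisymm (le_bnd hc y) (by linarith)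
    refine ⟨c, hc, ?_, rfl⟩
    intro w u hs
    have hadj : G.Adj w u := by
      by_contra h; exact hs (by simp [sgn, h])
    have hd : y w - y u ≠ 0 := by
      intro h0
      exact hs (by simp [sgn, hadj, h0, Real.sign_zero])
    have hterm := (eq_bnd_iff hc y).1 heq w u
    rw [if_pos hadj] at hterm
    simp only [sgn, if_pos hadj]
    rcases lt_or_gt_of_ne hd with h | h
    · rw [Real.sign_of_neg h]
      refine mul_right_cancel₀ hd ?_
      rw [hterm, abs_of_neg h]; ring
    · rw [Real.sign_of_pos h]
      refine mul_right_cancel₀ hd ?_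
      rw [hterm, abs_of_pos h]; ring
  · rintro ⟨c, hc, hcond, rfl⟩
    have heq : 2 * dotL y (zpt c) = bndSum G y := by
      refine (eq_bnd_iff hc y).2 fun w u => ?_
      by_cases hadj : G.Adj w u
      · by_cases hd : y w - y u = 0
        · simp [hd, hadj]
        · have hs : sgn G y w u ≠ 0 := by
            simp only [sgn, if_pos hadj]
            exact fun h => hd (Real.sign_eq_zero_iff.1 h)
          rw [hcond w u hs]
          exact sgn_mul G y w u
      · rw [hc.2.1 w u hadj, zero_mul, if_neg hadj]
    refine ⟨mem_gz.2 ⟨c, hc, rfl⟩, fun z hz => ?_⟩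
    obtain ⟨c', hc', rfl⟩ := mem_gz.1 hz
    have := le_bnd hc' y
    linarith

lemma faces_finite (G : SimpleGraph V) :
    {F : Set (V → ℝ) | F.Nonempty ∧ IsExposed ℝ (graphicalZonotope G) F}.Finite := by
  apply Set.Finite.subset (Set.finite_range
    (fun t : V → V → Fin 3 => sigFace G (fun w u => ((t w u : ℕ) : ℝ) - 1)))
  rintro F ⟨hne, hexp⟩
  obtain ⟨ℓ, hFeq⟩ := hexp hne
  set y : V → ℝ := fun w => ℓ (Pi.single w 1) with hy
  have hdot : ∀ x, ℓ x = dotL y x := fun x => clm_eq_dotL ℓ x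
  have hF2 : F = sigFace G (sgn G y) := by
    rw [hFeq, ← argmax_eq_sigFace G y]
    ext x
    simp only [Set.mem_setOf_eq, hdot]
  set t : V → V → Fin 3 := fun w u => if G.Adj w u then
    (if y w - y u < 0 then 0 else if y w - y u = 0 then 1 else 2) else 1 with ht
  refine ⟨t, ?_⟩
  have hfun : (fun w u => ((t w u : ℕ) : ℝ) - 1) = sgn G y := by
    funext w u
    rw [ht]
    by_cases hadj : G.Adj w u
    · simp only [sgn, if_pos hadj]
      rcases lt_trichotomy (y w - y u) 0 with h | h | h
      · rw [if_pos h, Real.sign_of_neg h]; norm_num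
      · rw [if_neg (by rw [h]; exact lt_irrefl _), if_pos h, h, Real.sign_zero]; norm_num
      · rw [if_neg (by exact not_lt.2 h.le), if_neg (by exact ne_of_gt h), Real.sign_of_pos h]
        norm_num
    · simp [sgn, hadj]
  show sigFace G (fun w u => ((t w u : ℕ) : ℝ) - 1) = F
  rw [hfun, hF2]

end ZonoWedge

namespace ZonoWedge
section Transfer
open Pointwise
variable {E F : Type*} [AddCommGroup E] [Module ℝ E] [TopologicalSpace E]
  [AddCommGroup F] [Module ℝ F] [TopologicalSpace F]

lemma exposed_image (e : E →L[ℝ] F) (r : F →L[ℝ] E) (hre : ∀ x, r (e x) = x)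
    {K C : Set E} (h : IsExposed ℝ K C) : IsExposed ℝ (⇑e '' K) (⇑e '' C) := by
  intro hne
  obtain ⟨ℓ, hC⟩ := h hne.of_image
  refine ⟨ℓ.comp r, ?_⟩
  rw [hC]
  ext x
  constructor
  · rintro ⟨z, ⟨hzK, hzmax⟩, rfl⟩
    refine ⟨⟨z, hzK, rfl⟩, ?_⟩
    rintro yy ⟨w, hwK, rfl⟩
    simp only [ContinuousLinearMap.comp_apply, hre]
    exact hzmax w hwK
  · rintro ⟨⟨z, hzK, rfl⟩, hmax⟩
    refine ⟨z, ⟨hzK, fun w hwK => ?_⟩, rfl⟩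
    have := hmax (e w) ⟨w, hwK, rfl⟩
    simpa only [ContinuousLinearMap.comp_apply, hre] using this

lemma exposed_preimage (e : E →L[ℝ] F) (r : F →L[ℝ] E) (hre : ∀ x, r (e x) = x)
    {K : Set E} {C : Set F} (h : IsExposed ℝ (⇑e '' K) C) : IsExposed ℝ K (⇑r '' C) := by
  intro hne
  obtain ⟨ℓ, hC⟩ := h hne.of_image
  refine ⟨ℓ.comp e, ?_⟩
  ext z
  constructor
  · rintro ⟨x, hxC, rfl⟩
    have hx2 := hC ▸ hxC
    obtain ⟨⟨k, hkK, rfl⟩, hmax⟩ := hx2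
    rw [hre]
    refine ⟨hkK, fun w hwK => ?_⟩
    exact hmax (e w) ⟨w, hwK, rfl⟩
  · rintro ⟨hzK, hmax⟩
    have hez : e z ∈ C := by
      rw [hC]
      refine ⟨⟨z, hzK, rfl⟩, ?_⟩
      rintro yy ⟨w, hwK, rfl⟩
      exact hmax w hwK
    exact ⟨e z, hez, hre z⟩

lemma image_restore (e : E →L[ℝ] F) (r : F →L[ℝ] E) (hre : ∀ x, r (e x) = x)
    {K : Set E} {C : Set F} (hC : C ⊆ ⇑e '' K) : ⇑e '' (⇑r '' C) = C := by
  ext x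
  constructor
  · rintro ⟨z, ⟨c, hc, rfl⟩, rfl⟩
    obtain ⟨k, _, rfl⟩ := hC hc
    rw [hre]; exact hc
  · intro hx
    obtain ⟨k, _, rfl⟩ := hC hx
    exact ⟨k, ⟨e k, hx, hre k⟩, rfl⟩

lemma vectorSpan_image (e : E →ₗ[ℝ] F) (s : Set E) :
    vectorSpan ℝ (⇑e '' s) = (vectorSpan ℝ s).map e := by
  rw [vectorSpan_def, vectorSpan_def, ← Submodule.span_image]
  congr 1
  ext x
  constructor
  · rintro ⟨p, ⟨p', hp', rfl⟩, q, ⟨q', hq', rfl⟩, rfl⟩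
    exact ⟨p' -ᵥ q', ⟨p', hp', q', hq', rfl⟩, by simp [vsub_eq_sub, map_sub]⟩
  · rintro ⟨d, ⟨p', hp', q', hq', rfl⟩, rfl⟩
    exact ⟨e p', ⟨p', hp', rfl⟩, e q', ⟨q', hq', rfl⟩, by simp [vsub_eq_sub, map_sub]⟩

lemma finrank_dir_image (e : E →L[ℝ] F) (hinj : Function.Injective ⇑e) (s : Set E) :
    Module.finrank ℝ (affineSpan ℝ (⇑e '' s)).direction
      = Module.finrank ℝ (affineSpan ℝ s).direction := by
  rw [direction_affineSpan, direction_affineSpan]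
  have h1 : ⇑e '' s = ⇑(e.toLinearMap) '' s := rfl
  rw [h1, vectorSpan_image]
  exact (LinearEquiv.finrank_eq
    (Submodule.equivMapOfInjective e.toLinearMap hinj (vectorSpan ℝ s))).symm

lemma argmax_add {K₁ K₂ : Set E} (ℓ m₁ m₂ : E →L[ℝ] ℝ)
    (hsep : ∀ x₁ ∈ K₁, ∀ x₂ ∈ K₂, ℓ (x₁ + x₂) = m₁ x₁ + m₂ x₂) :
    {x ∈ K₁ + K₂ | ∀ z ∈ K₁ + K₂, ℓ z ≤ ℓ x}
      = {x ∈ K₁ | ∀ z ∈ K₁, m₁ z ≤ m₁ x} + {x ∈ K₂ | ∀ z ∈ K₂, m₂ z ≤ m₂ x} := by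
  ext x
  constructor
  · rintro ⟨hxK, hmax⟩
    obtain ⟨x₁, hx₁, x₂, hx₂, rfl⟩ := Set.mem_add.1 hxK
    refine Set.mem_add.2 ⟨x₁, ⟨hx₁, fun z hz => ?_⟩, x₂, ⟨hx₂, fun z hz => ?_⟩, rfl⟩
    · have := hmax (z + x₂) (Set.mem_add.2 ⟨z, hz, x₂, hx₂, rfl⟩)
      rw [hsep z hz x₂ hx₂, hsep x₁ hx₁ x₂ hx₂] at this
      linarith
    · have := hmax (x₁ + z) (Set.mem_add.2 ⟨x₁, hx₁, z, hz, rfl⟩)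
      rw [hsep x₁ hx₁ z hz, hsep x₁ hx₁ x₂ hx₂] at this
      linarith
  · rintro hm
    obtain ⟨x₁, ⟨hx₁, hm₁⟩, x₂, ⟨hx₂, hm₂⟩, rfl⟩ := Set.mem_add.1 hm
    refine ⟨Set.mem_add.2 ⟨x₁, hx₁, x₂, hx₂, rfl⟩, fun z hz => ?_⟩
    obtain ⟨z₁, hz₁, z₂, hz₂, rfl⟩ := Set.mem_add.1 hz
    rw [hsep z₁ hz₁ z₂ hz₂, hsep x₁ hx₁ x₂ hx₂]
    exact add_le_add (hm₁ z₁ hz₁) (hm₂ z₂ hz₂)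

lemma vectorSpan_add_eq {s t : Set E} (hs : s.Nonempty) (ht : t.Nonempty) :
    vectorSpan ℝ (s + t) = vectorSpan ℝ s ⊔ vectorSpan ℝ t := by
  refine le_antisymm ?_ (sup_le ?_ ?_)
  · rw [vectorSpan_def]
    rw [Submodule.span_le]
    rintro d ⟨p, hp, q, hq, rfl⟩
    obtain ⟨p₁, hp₁, p₂, hp₂, rfl⟩ := Set.mem_add.1 hp
    obtain ⟨q₁, hq₁, q₂, hq₂, rfl⟩ := Set.mem_add.1 hq
    have : (p₁ + p₂) -ᵥ (q₁ + q₂) = (p₁ -ᵥ q₁) + (p₂ -ᵥ q₂) := by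
      simp [vsub_eq_sub]; abel
    beta_reduce
    rw [this]
    exact Submodule.add_mem _
      (Submodule.mem_sup_left (vsub_mem_vectorSpan ℝ hp₁ hq₁))
      (Submodule.mem_sup_right (vsub_mem_vectorSpan ℝ hp₂ hq₂))
  · rw [vectorSpan_def, Submodule.span_le]
    rintro d ⟨p, hp, q, hq, rfl⟩
    obtain ⟨t0, ht0⟩ := ht
    have : p -ᵥ q = (p + t0) -ᵥ (q + t0) := by simp [vsub_eq_sub]
    beta_reduce
    rw [this]
    exact vsub_mem_vectorSpan ℝ (Set.mem_add.2 ⟨p, hp, t0, ht0, rfl⟩)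
      (Set.mem_add.2 ⟨q, hq, t0, ht0, rfl⟩)
  · rw [vectorSpan_def, Submodule.span_le]
    rintro d ⟨p, hp, q, hq, rfl⟩
    obtain ⟨s0, hs0⟩ := hs
    have : p -ᵥ q = (s0 + p) -ᵥ (s0 + q) := by simp [vsub_eq_sub]
    beta_reduce
    rw [this]
    exact vsub_mem_vectorSpan ℝ (Set.mem_add.2 ⟨s0, hs0, p, hp, rfl⟩)
      (Set.mem_add.2 ⟨s0, hs0, q, hq, rfl⟩)

lemma finrank_vectorSpan_add [FiniteDimensional ℝ E] {s t : Set E}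
    (hs : s.Nonempty) (ht : t.Nonempty)
    (hdisj : vectorSpan ℝ s ⊓ vectorSpan ℝ t = ⊥) :
    Module.finrank ℝ (vectorSpan ℝ (s + t))
      = Module.finrank ℝ (vectorSpan ℝ s) + Module.finrank ℝ (vectorSpan ℝ t) := by
  rw [vectorSpan_add_eq hs ht]
  have h := Submodule.finrank_sup_add_finrank_inf_eq (vectorSpan ℝ s) (vectorSpan ℝ t)
  rw [hdisj] at h
  simpa using h

lemma vectorSpan_le_of_subset (p : Submodule ℝ E) {s : Set E} (hs : s ⊆ (p : Set E)) :
    vectorSpan ℝ s ≤ p := by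
  rw [vectorSpan_def, Submodule.span_le]
  rintro d ⟨x, hx, y, hy, rfl⟩
  exact Submodule.sub_mem p (hs hx) (hs hy)

end Transfer
end ZonoWedge

namespace ZonoWedge
section Wedge
open Pointwise
variable {V : Type} [Fintype V] [DecidableEq V]

noncomputable def extL (S : Finset V) : (↥(S : Set V) → ℝ) →L[ℝ] (V → ℝ) :=
  LinearMap.toContinuousLinearMap
    { toFun := fun x w => if h : w ∈ S then x ⟨w, Finset.mem_coe.2 h⟩ else 0
      map_add' := by intros x y; funext w; by_cases h : w ∈ S <;> simp [h]
      map_smul' := by intros c x; funext w; by_cases h : w ∈ S <;> simp [h] }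

noncomputable def resL (S : Finset V) : (V → ℝ) →L[ℝ] (↥(S : Set V) → ℝ) :=
  LinearMap.toContinuousLinearMap
    { toFun := fun x w => x ↑w
      map_add' := by intros; rfl
      map_smul' := by intros; rfl }

lemma extL_apply (S : Finset V) (x : ↥(S : Set V) → ℝ) (w : V) :
    extL S x w = if h : w ∈ S then x ⟨w, Finset.mem_coe.2 h⟩ else 0 := rfl

lemma resL_apply (S : Finset V) (x : V → ℝ) (w : ↥(S : Set V)) :
    resL S x w = x ↑w := rfl

lemma res_ext (S : Finset V) : ∀ x, resL S (extL S x) = x := by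
  intro x
  funext w
  obtain ⟨w, hw⟩ := w
  rw [resL_apply, extL_apply, dif_pos (Finset.mem_coe.1 hw)]

lemma extL_inj (S : Finset V) : Function.Injective ⇑(extL S) :=
  Function.LeftInverse.injective (res_ext S)

lemma extL_off (S : Finset V) (z : ↥(S : Set V) → ℝ) {w : V} (hw : w ∉ S) :
    extL S z w = 0 := dif_neg hw

lemma sum_extL (S : Finset V) (z : ↥(S : Set V) → ℝ) :
    ∑ w, extL S z w = ∑ i : ↥(S : Set V), z i := by
  rw [show (∑ i : ↥(S : Set V), z i) = ∑ i : ↥(S : Set V), extL S z ↑i from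
    Finset.sum_congr rfl fun i _ => by
      obtain ⟨i, hi⟩ := i
      rw [extL_apply, dif_pos (Finset.mem_coe.1 hi)]]
  rw [Finset.sum_finset_coe (fun w => extL S z w) S]
  exact (Finset.sum_subset (Finset.subset_univ S) (fun x _ hx => extL_off S z hx)).symm

/-- The subspace of vectors supported on `S` with zero coordinate sum. -/
noncomputable def Usub (S : Finset V) : Submodule ℝ (V → ℝ) where
  carrier := {x | (∀ w ∉ S, x w = 0) ∧ ∑ w, x w = 0}
  add_mem' := by
    rintro x y ⟨hx1, hx2⟩ ⟨hy1, hy2⟩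
    refine ⟨fun w hw => by simp [hx1 w hw, hy1 w hw], ?_⟩
    simp [Finset.sum_add_distrib, hx2, hy2]
  zero_mem' := by simp
  smul_mem' := by
    rintro c x ⟨hx1, hx2⟩
    refine ⟨fun w hw => by simp [hx1 w hw], ?_⟩
    simp [← Finset.mul_sum, hx2]

lemma mem_Usub {S : Finset V} {x : V → ℝ} :
    x ∈ Usub S ↔ (∀ w ∉ S, x w = 0) ∧ ∑ w, x w = 0 := Iff.rfl

lemma image_gz_subset_Usub (S : Finset V) (G' : SimpleGraph ↥(S : Set V)) :
    ⇑(extL S) '' graphicalZonotope G' ⊆ (Usub S : Set (V → ℝ)) := by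
  rintro x ⟨z, hz, rfl⟩
  obtain ⟨c, hc, rfl⟩ := mem_gz.1 hz
  refine mem_Usub.2 ⟨fun w hw => extL_off S _ hw, ?_⟩
  rw [sum_extL]
  exact sum_zpt_eq_zero hc.1

noncomputable def projL (S : Finset V) (v : V) : (V → ℝ) →L[ℝ] (V → ℝ) :=
  LinearMap.toContinuousLinearMap
    { toFun := fun x w => if w ∈ S ∧ w ≠ v then x w
        else if w = v then -∑ u ∈ S.erase v, x u else 0
      map_add' := by
        intros x y
        funext w
        by_cases h1 : w ∈ S ∧ w ≠ v
        · simp [h1]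
        · by_cases h2 : w = v
          · subst h2
            have hcond : ¬(w ∈ S ∧ w ≠ w) := by simp
            simp only [Pi.add_apply, if_neg hcond, if_pos rfl, Finset.sum_add_distrib,
              if_true]
            ring
          · have h3 : w ∉ S := fun h => h1 ⟨h, h2⟩
            simp [h1, h2, h3]
      map_smul' := by
        intros c x
        funext w
        by_cases h1 : w ∈ S ∧ w ≠ v
        · simp [h1]
        · by_cases h2 : w = v <;> simp [h1, h2, ← Finset.mul_sum] }

lemma projL_apply (S : Finset V) (v : V) (x : V → ℝ) (w : V) :
    projL S v x w = if w ∈ S ∧ w ≠ v then x w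
      else if w = v then -∑ u ∈ S.erase v, x u else 0 := rfl

lemma projL_eq_self {S : Finset V} {v : V} (hv : v ∈ S) {x : V → ℝ} (hx : x ∈ Usub S) :
    projL S v x = x := by
  obtain ⟨hoff, hsum⟩ := mem_Usub.1 hx
  have hS : ∑ u ∈ S, x u = ∑ u, x u :=
    Finset.sum_subset (Finset.subset_univ S) (fun w _ hw => hoff w hw)
  funext w
  rw [projL_apply]
  by_cases h1 : w ∈ S ∧ w ≠ v
  · rw [if_pos h1]
  · rw [if_neg h1]
    by_cases h2 : w = v
    · rw [if_pos h2, h2]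
      have := Finset.add_sum_erase S x hv
      rw [hS, hsum] at this
      linarith
    · rw [if_neg h2]
      have hw : w ∉ S := fun hw => h1 ⟨hw, h2⟩
      exact (hoff w hw).symm

lemma projL_eq_zero {S T : Finset V} {v : V} (hI : S ∩ T = {v}) {x : V → ℝ}
    (hoff : ∀ w ∉ T, x w = 0) : projL S v x = 0 := by
  funext w
  rw [projL_apply]
  by_cases h1 : w ∈ S ∧ w ≠ v
  · rw [if_pos h1]
    have hw : w ∉ T := by
      intro hw
      have : w ∈ S ∩ T := Finset.mem_inter.2 ⟨h1.1, hw⟩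
      rw [hI, Finset.mem_singleton] at this
      exact h1.2 this
    simp [hoff w hw]
  · rw [if_neg h1]
    by_cases h2 : w = v
    · rw [if_pos h2]
      have : ∀ u ∈ S.erase v, x u = 0 := by
        intro u hu
        obtain ⟨hune, huS⟩ := Finset.mem_erase.1 hu
        refine hoff u fun huT => ?_
        have : u ∈ S ∩ T := Finset.mem_inter.2 ⟨huS, huT⟩
        rw [hI, Finset.mem_singleton] at this
        exact hune this
      rw [Finset.sum_congr rfl this]
      simp
    · simp [h2]

lemma Usub_disj {A B : Finset V} {v : V} (hI : A ∩ B = {v}) {x : V → ℝ}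
    (hxA : x ∈ Usub A) (hxB : x ∈ Usub B) : x = 0 := by
  obtain ⟨hoffA, hsum⟩ := mem_Usub.1 hxA
  obtain ⟨hoffB, -⟩ := mem_Usub.1 hxB
  have hne : ∀ w, w ≠ v → x w = 0 := by
    intro w hw
    by_cases hA : w ∈ A
    · refine hoffB w fun hB => hw ?_
      have : w ∈ A ∩ B := Finset.mem_inter.2 ⟨hA, hB⟩
      rwa [hI, Finset.mem_singleton] at this
    · exact hoffA w hA
  have hv : x v = 0 := by
    have : ∑ w, x w = x v := Finset.sum_eq_single v (fun w _ hw => hne w hw)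
      (fun h => absurd (Finset.mem_univ v) h)
    rw [hsum] at this
    exact this.symm
  funext w
  by_cases hw : w = v
  · rw [hw, hv]; rfl
  · rw [hne w hw]; rfl

lemma extL_zpt (S : Finset V) (d : V → V → ℝ) (hd : ∀ u w, d u w ≠ 0 → u ∈ S ∧ w ∈ S) :
    extL S (zpt (fun (i j : ↥(S : Set V)) => d ↑i ↑j)) = zpt d := by
  funext w
  rw [extL_apply]
  by_cases h : w ∈ S
  · rw [dif_pos h]
    show ∑ j : ↥(S : Set V), d w ↑j = ∑ u, d w u
    rw [Finset.sum_finset_coe (fun j => d w j) S]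
    exact Finset.sum_subset (Finset.subset_univ S) (fun u _ hu => by
      by_contra hne; exact hu (hd w u hne).2)
  · rw [dif_neg h]
    symm
    refine Finset.sum_eq_zero fun u _ => ?_
    by_contra hne; exact h (hd w u hne).1

lemma gz_decomp (G : SimpleGraph V) (v : V) (A B : Finset V) (hI : A ∩ B = {v})
    (hE : ∀ u w, G.Adj u w → (u ∈ A ∧ w ∈ A) ∨ (u ∈ B ∧ w ∈ B)) :
    graphicalZonotope G
      = ⇑(extL A) '' graphicalZonotope (G.induce (A : Set V))
        + ⇑(extL B) '' graphicalZonotope (G.induce (B : Set V)) := by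
  have hvA : v ∈ A := by
    have : v ∈ A ∩ B := by rw [hI]; exact Finset.mem_singleton_self v
    exact (Finset.mem_inter.1 this).1
  have hvB : v ∈ B := by
    have : v ∈ A ∩ B := by rw [hI]; exact Finset.mem_singleton_self v
    exact (Finset.mem_inter.1 this).2
  ext x
  constructor
  · intro hx
    obtain ⟨c, hc, rfl⟩ := mem_gz.1 hx
    set cA : V → V → ℝ := fun u w => if u ∈ A ∧ w ∈ A then c u w else 0 with hcA
    set cB : V → V → ℝ := fun u w => if u ∈ A ∧ w ∈ A then 0 else c u w with hcB
    have hcA_supp : ∀ u w, cA u w ≠ 0 → u ∈ A ∧ w ∈ A := by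
      intro u w h
      by_contra hn
      exact h (if_neg hn)
    have hcB_supp : ∀ u w, cB u w ≠ 0 → u ∈ B ∧ w ∈ B := by
      intro u w h
      by_cases hP : u ∈ A ∧ w ∈ A
      · exact absurd (if_pos hP) h
      · have hcBv : cB u w = c u w := if_neg hP
        rw [hcBv] at h
        have hadj : G.Adj u w := by
          by_contra hn
          exact h (hc.2.1 u w hn)
        rcases hE u w hadj with h' | h'
        · exact absurd h' hP
        · exact h'
    have memA : zpt (fun (i j : ↥(A : Set V)) => c ↑i ↑j)
        ∈ graphicalZonotope (G.induce (A : Set V)) :=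
      mem_gz.2 ⟨_, ⟨fun i j => hc.1 _ _, fun i j hn => hc.2.1 _ _ hn,
        fun i j => hc.2.2 _ _⟩, rfl⟩
    have memB : zpt (fun (i j : ↥(B : Set V)) => cB ↑i ↑j)
        ∈ graphicalZonotope (G.induce (B : Set V)) := by
      refine mem_gz.2 ⟨_, ⟨fun i j => ?_, fun i j hn => ?_, fun i j => ?_⟩, rfl⟩
      · show cB ↑i ↑j = - cB ↑j ↑i
        by_cases hP : (↑i : V) ∈ A ∧ (↑j : V) ∈ A
        · simp only [hcB]
          rw [if_pos hP, if_pos (And.intro hP.2 hP.1), neg_zero]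
        · have hP' : ¬((↑j : V) ∈ A ∧ (↑i : V) ∈ A) := fun h => hP ⟨h.2, h.1⟩
          simp only [hcB]
          rw [if_neg hP, if_neg hP']
          exact hc.1 _ _
      · show cB ↑i ↑j = 0
        have hnadj : ¬ G.Adj ↑i ↑j := hn
        by_cases hP : (↑i : V) ∈ A ∧ (↑j : V) ∈ A
        · simp only [hcB, if_pos hP]
        · simp only [hcB, if_neg hP]
          exact hc.2.1 _ _ hnadj
      · show |cB ↑i ↑j| ≤ 1
        by_cases hP : (↑i : V) ∈ A ∧ (↑j : V) ∈ A
        · simp only [hcB, if_pos hP, abs_zero]; exact zero_le_one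
        · simp only [hcB, if_neg hP]; exact hc.2.2 _ _
    refine Set.mem_add.2 ⟨extL A (zpt (fun (i j : ↥(A : Set V)) => c ↑i ↑j)),
      ⟨_, memA, rfl⟩, extL B (zpt (fun (i j : ↥(B : Set V)) => cB ↑i ↑j)),
      ⟨_, memB, rfl⟩, ?_⟩
    have hA_eq : extL A (zpt (fun (i j : ↥(A : Set V)) => c ↑i ↑j)) = zpt cA := by
      have h1 : extL A (zpt (fun (i j : ↥(A : Set V)) => cA ↑i ↑j)) = zpt cA :=
        extL_zpt A cA hcA_supp
      rw [← h1]
      congr 1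
      funext i
      refine Finset.sum_congr rfl fun j _ => ?_
      have hi : (↑i : V) ∈ A := Finset.mem_coe.1 i.2
      have hj : (↑j : V) ∈ A := Finset.mem_coe.1 j.2
      exact (if_pos (And.intro hi hj)).symm
    have hB_eq : extL B (zpt (fun (i j : ↥(B : Set V)) => cB ↑i ↑j)) = zpt cB :=
      extL_zpt B cB hcB_supp
    rw [hA_eq, hB_eq]
    funext w
    show zpt cA w + zpt cB w = zpt c w
    rw [zpt, zpt, zpt, ← Finset.sum_add_distrib]
    refine Finset.sum_congr rfl fun u _ => ?_
    by_cases hP : w ∈ A ∧ u ∈ A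
    · simp only [hcA, hcB, if_pos hP, add_zero]
    · simp only [hcA, hcB, if_neg hP, zero_add]
  · intro hx
    obtain ⟨xa, hxa, xb, hxb, rfl⟩ := Set.mem_add.1 hx
    obtain ⟨za, hza, rfl⟩ := hxa
    obtain ⟨zb, hzb, rfl⟩ := hxb
    obtain ⟨c₁, hc₁, rfl⟩ := mem_gz.1 hza
    obtain ⟨c₂, hc₂, rfl⟩ := mem_gz.1 hzb
    set dA : V → V → ℝ := fun u w => if h : u ∈ A ∧ w ∈ A then
      c₁ ⟨u, Finset.mem_coe.2 h.1⟩ ⟨w, Finset.mem_coe.2 h.2⟩ else 0 with hdA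
    set dB : V → V → ℝ := fun u w => if h : u ∈ B ∧ w ∈ B then
      c₂ ⟨u, Finset.mem_coe.2 h.1⟩ ⟨w, Finset.mem_coe.2 h.2⟩ else 0 with hdB
    have hdA_anti : ∀ u w, dA u w = - dA w u := by
      intro u w
      by_cases h : u ∈ A ∧ w ∈ A
      · simp only [hdA, dif_pos h, dif_pos (And.intro h.2 h.1)]
        exact hc₁.1 _ _
      · have h' : ¬(w ∈ A ∧ u ∈ A) := fun h2 => h ⟨h2.2, h2.1⟩
        simp only [hdA, dif_neg h, dif_neg h', neg_zero]
    have hdB_anti : ∀ u w, dB u w = - dB w u := by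
      intro u w
      by_cases h : u ∈ B ∧ w ∈ B
      · simp only [hdB, dif_pos h, dif_pos (And.intro h.2 h.1)]
        exact hc₂.1 _ _
      · have h' : ¬(w ∈ B ∧ u ∈ B) := fun h2 => h ⟨h2.2, h2.1⟩
        simp only [hdB, dif_neg h, dif_neg h', neg_zero]
    have hdA_supp : ∀ u w, dA u w ≠ 0 → u ∈ A ∧ w ∈ A := by
      intro u w h
      by_contra hn
      exact h (dif_neg hn)
    have hdB_supp : ∀ u w, dB u w ≠ 0 → u ∈ B ∧ w ∈ B := by
      intro u w h
      by_contra hn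
      exact h (dif_neg hn)
    have hkey : ∀ u w, dA u w = 0 ∨ dB u w = 0 := by
      intro u w
      by_cases hP : u ∈ A ∧ w ∈ A
      · by_cases hQ : u ∈ B ∧ w ∈ B
        · left
          have hu : u = v := by
            have : u ∈ A ∩ B := Finset.mem_inter.2 ⟨hP.1, hQ.1⟩
            rwa [hI, Finset.mem_singleton] at this
          have hw : w = v := by
            have : w ∈ A ∩ B := Finset.mem_inter.2 ⟨hP.2, hQ.2⟩
            rwa [hI, Finset.mem_singleton] at this
          rw [hu, hw]
          have := hdA_anti v v
          linarith
        · right; exact dif_neg hQ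
      · left; exact dif_neg hP
    refine mem_gz.2 ⟨fun u w => dA u w + dB u w, ⟨fun u w => ?_, fun u w hn => ?_,
      fun u w => ?_⟩, ?_⟩
    · beta_reduce
      rw [hdA_anti u w, hdB_anti u w]; ring
    · have h1 : dA u w = 0 := by
        by_cases hP : u ∈ A ∧ w ∈ A
        · rw [hdA]
          simp only [dif_pos hP]
          exact hc₁.2.1 _ _ hn
        · exact dif_neg hP
      have h2 : dB u w = 0 := by
        by_cases hQ : u ∈ B ∧ w ∈ B
        · rw [hdB]
          simp only [dif_pos hQ]
          exact hc₂.2.1 _ _ hn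
        · exact dif_neg hQ
      beta_reduce
      rw [h1, h2, add_zero]
    · have hbA : |dA u w| ≤ 1 := by
        by_cases hP : u ∈ A ∧ w ∈ A
        · rw [hdA]; simp only [dif_pos hP]; exact hc₁.2.2 _ _
        · rw [hdA]; simp only [dif_neg hP, abs_zero]; exact zero_le_one
      have hbB : |dB u w| ≤ 1 := by
        by_cases hQ : u ∈ B ∧ w ∈ B
        · rw [hdB]; simp only [dif_pos hQ]; exact hc₂.2.2 _ _
        · rw [hdB]; simp only [dif_neg hQ, abs_zero]; exact zero_le_one
      beta_reduce
      rcases hkey u w with h | h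
      · rw [h, zero_add]; exact hbB
      · rw [h, add_zero]; exact hbA
    · have hAeq : extL A (zpt c₁) = zpt dA := by
        have h1 : extL A (zpt (fun (i j : ↥(A : Set V)) => dA ↑i ↑j)) = zpt dA :=
          extL_zpt A dA hdA_supp
        rw [← h1]
        congr 1
        funext i
        refine Finset.sum_congr rfl fun j _ => ?_
        have hi : (↑i : V) ∈ A := Finset.mem_coe.1 i.2
        have hj : (↑j : V) ∈ A := Finset.mem_coe.1 j.2
        simp only [hdA, dif_pos (And.intro hi hj), Subtype.coe_eta]
      have hBeq : extL B (zpt c₂) = zpt dB := by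
        have h1 : extL B (zpt (fun (i j : ↥(B : Set V)) => dB ↑i ↑j)) = zpt dB :=
          extL_zpt B dB hdB_supp
        rw [← h1]
        congr 1
        funext i
        refine Finset.sum_congr rfl fun j _ => ?_
        have hi : (↑i : V) ∈ B := Finset.mem_coe.1 i.2
        have hj : (↑j : V) ∈ B := Finset.mem_coe.1 j.2
        simp only [hdB, dif_pos (And.intro hi hj), Subtype.coe_eta]
      rw [hAeq, hBeq]
      funext w
      show zpt dA w + zpt dB w = zpt _ w
      rw [zpt, zpt, zpt, ← Finset.sum_add_distrib]

variable {G : SimpleGraph V} {v : V} {A B : Finset V}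

lemma hvA_of (hI : A ∩ B = {v}) : v ∈ A := by
  have : v ∈ A ∩ B := by rw [hI]; exact Finset.mem_singleton_self v
  exact (Finset.mem_inter.1 this).1

lemma hvB_of (hI : A ∩ B = {v}) : v ∈ B := by
  have : v ∈ A ∩ B := by rw [hI]; exact Finset.mem_singleton_self v
  exact (Finset.mem_inter.1 this).2

lemma faceMap_wd (hI : A ∩ B = {v})
    (hE : ∀ u w, G.Adj u w → (u ∈ A ∧ w ∈ A) ∨ (u ∈ B ∧ w ∈ B))
    {F₁ : Set (↥(A : Set V) → ℝ)} {F₂ : Set (↥(B : Set V) → ℝ)}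
    (hne₁ : F₁.Nonempty) (hexp₁ : IsExposed ℝ (graphicalZonotope (G.induce (A : Set V))) F₁)
    (hne₂ : F₂.Nonempty) (hexp₂ : IsExposed ℝ (graphicalZonotope (G.induce (B : Set V))) F₂) :
    (⇑(extL A) '' F₁ + ⇑(extL B) '' F₂).Nonempty ∧
      IsExposed ℝ (graphicalZonotope G) (⇑(extL A) '' F₁ + ⇑(extL B) '' F₂) := by
  refine ⟨Set.Nonempty.add (hne₁.image _) (hne₂.image _), fun _ => ?_⟩
  have e₁ : IsExposed ℝ (⇑(extL A) '' graphicalZonotope (G.induce (A : Set V)))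
      (⇑(extL A) '' F₁) := exposed_image (extL A) (resL A) (res_ext A) hexp₁
  have e₂ : IsExposed ℝ (⇑(extL B) '' graphicalZonotope (G.induce (B : Set V)))
      (⇑(extL B) '' F₂) := exposed_image (extL B) (resL B) (res_ext B) hexp₂
  obtain ⟨m₁, hm₁⟩ := e₁ (hne₁.image _)
  obtain ⟨m₂, hm₂⟩ := e₂ (hne₂.image _)
  refine ⟨m₁.comp (projL A v) + m₂.comp (projL B v), ?_⟩
  rw [gz_decomp G v A B hI hE]
  have hsep : ∀ x₁ ∈ ⇑(extL A) '' graphicalZonotope (G.induce (A : Set V)),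
      ∀ x₂ ∈ ⇑(extL B) '' graphicalZonotope (G.induce (B : Set V)),
      (m₁.comp (projL A v) + m₂.comp (projL B v)) (x₁ + x₂) = m₁ x₁ + m₂ x₂ := by
    intro x₁ hx₁ x₂ hx₂
    have hU₁ := image_gz_subset_Usub A (G.induce (A : Set V)) hx₁
    have hU₂ := image_gz_subset_Usub B (G.induce (B : Set V)) hx₂
    have p1 : projL A v (x₁ + x₂) = x₁ := by
      rw [map_add, projL_eq_self (hvA_of hI) hU₁,
        projL_eq_zero hI (mem_Usub.1 hU₂).1, add_zero]
    have p2 : projL B v (x₁ + x₂) = x₂ := by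
      rw [map_add, projL_eq_zero (by rw [Finset.inter_comm]; exact hI) (mem_Usub.1 hU₁).1,
        projL_eq_self (hvB_of hI) hU₂, zero_add]
    simp only [ContinuousLinearMap.add_apply, ContinuousLinearMap.comp_apply, p1, p2]
  rw [argmax_add _ m₁ m₂ hsep, ← hm₁, ← hm₂]

lemma faceMap_inj (hI : A ∩ B = {v})
    {F₁ F₁' : Set (↥(A : Set V) → ℝ)} {F₂ F₂' : Set (↥(B : Set V) → ℝ)}
    (hne₁ : F₁.Nonempty) (hexp₁ : IsExposed ℝ (graphicalZonotope (G.induce (A : Set V))) F₁)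
    (hne₂ : F₂.Nonempty) (hexp₂ : IsExposed ℝ (graphicalZonotope (G.induce (B : Set V))) F₂)
    (hne₁' : F₁'.Nonempty) (hexp₁' : IsExposed ℝ (graphicalZonotope (G.induce (A : Set V))) F₁')
    (hne₂' : F₂'.Nonempty) (hexp₂' : IsExposed ℝ (graphicalZonotope (G.induce (B : Set V))) F₂')
    (heq : ⇑(extL A) '' F₁ + ⇑(extL B) '' F₂ = ⇑(extL A) '' F₁' + ⇑(extL B) '' F₂') :
    F₁ = F₁' ∧ F₂ = F₂' := by
  have hUA : ∀ {F : Set (↥(A : Set V) → ℝ)},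
      IsExposed ℝ (graphicalZonotope (G.induce (A : Set V))) F →
      ∀ x ∈ ⇑(extL A) '' F, x ∈ Usub A := by
    intro F hexp x hx
    obtain ⟨z, hz, rfl⟩ := hx
    exact image_gz_subset_Usub A _ ⟨z, hexp.subset hz, rfl⟩
  have hUB : ∀ {F : Set (↥(B : Set V) → ℝ)},
      IsExposed ℝ (graphicalZonotope (G.induce (B : Set V))) F →
      ∀ x ∈ ⇑(extL B) '' F, x ∈ Usub B := by
    intro F hexp x hx
    obtain ⟨z, hz, rfl⟩ := hx
    exact image_gz_subset_Usub B _ ⟨z, hexp.subset hz, rfl⟩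
  have key : ∀ {G₁ G₁' : Set (↥(A : Set V) → ℝ)} {G₂ G₂' : Set (↥(B : Set V) → ℝ)},
      IsExposed ℝ (graphicalZonotope (G.induce (A : Set V))) G₁ →
      IsExposed ℝ (graphicalZonotope (G.induce (A : Set V))) G₁' →
      IsExposed ℝ (graphicalZonotope (G.induce (B : Set V))) G₂ →
      IsExposed ℝ (graphicalZonotope (G.induce (B : Set V))) G₂' →
      G₂.Nonempty →
      ⇑(extL A) '' G₁ + ⇑(extL B) '' G₂ = ⇑(extL A) '' G₁' + ⇑(extL B) '' G₂' →
      G₁ ⊆ G₁' := by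
    intro G₁ G₁' G₂ G₂' he₁ he₁' he₂ he₂' hn₂ heq z hz
    obtain ⟨z₂, hz₂⟩ := hn₂
    have hmem : extL A z + extL B z₂ ∈ ⇑(extL A) '' G₁' + ⇑(extL B) '' G₂' := by
      rw [← heq]
      exact Set.mem_add.2 ⟨_, ⟨z, hz, rfl⟩, _, ⟨z₂, hz₂, rfl⟩, rfl⟩
    obtain ⟨x₁, hx₁, x₂, hx₂, hsum⟩ := Set.mem_add.1 hmem
    have hdiff : extL A z - x₁ = 0 := by
      have h1 : extL A z - x₁ ∈ Usub A :=
        Submodule.sub_mem _ (hUA he₁ _ ⟨z, hz, rfl⟩) (hUA he₁' _ hx₁)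
      have h2 : extL A z - x₁ ∈ Usub B := by
        have : extL A z - x₁ = x₂ - extL B z₂ := by
          have := hsum
          abel_nf
          abel_nf at this
          linear_combination (norm := abel) - this
        rw [this]
        exact Submodule.sub_mem _ (hUB he₂' _ hx₂) (hUB he₂ _ ⟨z₂, hz₂, rfl⟩)
      exact Usub_disj hI h1 h2
    have hxz : x₁ = extL A z := by
      have := sub_eq_zero.1 hdiff
      exact this.symm
    rw [hxz] at hx₁
    obtain ⟨z', hz', hzz⟩ := hx₁
    rwa [extL_inj A hzz] at hz'
  constructor
  · exact Set.Subset.antisymm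
      (key hexp₁ hexp₁' hexp₂ hexp₂' hne₂ heq)
      (key hexp₁' hexp₁ hexp₂' hexp₂ hne₂' heq.symm)
  · -- symmetric in the B component
    have keyB : ∀ {G₁ G₁' : Set (↥(A : Set V) → ℝ)} {G₂ G₂' : Set (↥(B : Set V) → ℝ)},
        IsExposed ℝ (graphicalZonotope (G.induce (A : Set V))) G₁ →
        IsExposed ℝ (graphicalZonotope (G.induce (A : Set V))) G₁' →
        IsExposed ℝ (graphicalZonotope (G.induce (B : Set V))) G₂ →
        IsExposed ℝ (graphicalZonotope (G.induce (B : Set V))) G₂' →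
        G₁.Nonempty →
        ⇑(extL A) '' G₁ + ⇑(extL B) '' G₂ = ⇑(extL A) '' G₁' + ⇑(extL B) '' G₂' →
        G₂ ⊆ G₂' := by
      intro G₁ G₁' G₂ G₂' he₁ he₁' he₂ he₂' hn₁ heq z hz
      obtain ⟨z₁, hz₁⟩ := hn₁
      have hmem : extL A z₁ + extL B z ∈ ⇑(extL A) '' G₁' + ⇑(extL B) '' G₂' := by
        rw [← heq]
        exact Set.mem_add.2 ⟨_, ⟨z₁, hz₁, rfl⟩, _, ⟨z, hz, rfl⟩, rfl⟩
      obtain ⟨x₁, hx₁, x₂, hx₂, hsum⟩ := Set.mem_add.1 hmem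
      have hdiff : extL B z - x₂ = 0 := by
        have h2 : extL B z - x₂ ∈ Usub B :=
          Submodule.sub_mem _ (hUB he₂ _ ⟨z, hz, rfl⟩) (hUB he₂' _ hx₂)
        have h1 : extL B z - x₂ ∈ Usub A := by
          have : extL B z - x₂ = x₁ - extL A z₁ := by
            linear_combination (norm := abel) - hsum
          rw [this]
          exact Submodule.sub_mem _ (hUA he₁' _ hx₁) (hUA he₁ _ ⟨z₁, hz₁, rfl⟩)
        exact Usub_disj hI h1 h2
      have hxz : x₂ = extL B z := (sub_eq_zero.1 hdiff).symm
      rw [hxz] at hx₂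
      obtain ⟨z', hz', hzz⟩ := hx₂
      rwa [extL_inj B hzz] at hz'
    exact Set.Subset.antisymm
      (keyB hexp₁ hexp₁' hexp₂ hexp₂' hne₁ heq)
      (keyB hexp₁' hexp₁ hexp₂' hexp₂ hne₁' heq.symm)

lemma faceMap_surj (hI : A ∩ B = {v})
    (hE : ∀ u w, G.Adj u w → (u ∈ A ∧ w ∈ A) ∨ (u ∈ B ∧ w ∈ B))
    {F : Set (V → ℝ)} (hne : F.Nonempty) (hexp : IsExposed ℝ (graphicalZonotope G) F) :
    ∃ (F₁ : Set (↥(A : Set V) → ℝ)) (F₂ : Set (↥(B : Set V) → ℝ)),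
      F₁.Nonempty ∧ IsExposed ℝ (graphicalZonotope (G.induce (A : Set V))) F₁ ∧
      F₂.Nonempty ∧ IsExposed ℝ (graphicalZonotope (G.induce (B : Set V))) F₂ ∧
      ⇑(extL A) '' F₁ + ⇑(extL B) '' F₂ = F := by
  obtain ⟨ℓ, hF⟩ := hexp hne
  set KA := ⇑(extL A) '' graphicalZonotope (G.induce (A : Set V)) with hKA
  set KB := ⇑(extL B) '' graphicalZonotope (G.induce (B : Set V)) with hKB
  have hdecomp : graphicalZonotope G = KA + KB := gz_decomp G v A B hI hE
  have hsep : ∀ x₁ ∈ KA, ∀ x₂ ∈ KB, ℓ (x₁ + x₂) = ℓ x₁ + ℓ x₂ :=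
    fun x₁ _ x₂ _ => map_add ℓ x₁ x₂
  have harg := argmax_add (K₁ := KA) (K₂ := KB) ℓ ℓ ℓ hsep
  have hFsum : F = {x ∈ KA | ∀ z ∈ KA, ℓ z ≤ ℓ x} + {x ∈ KB | ∀ z ∈ KB, ℓ z ≤ ℓ x} := by
    rw [hF]
    rw [hdecomp]
    exact harg
  set C₁ := {x ∈ KA | ∀ z ∈ KA, ℓ z ≤ ℓ x} with hC₁
  set C₂ := {x ∈ KB | ∀ z ∈ KB, ℓ z ≤ ℓ x} with hC₂
  have hC₁exp : IsExposed ℝ KA C₁ := fun _ => ⟨ℓ, rfl⟩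
  have hC₂exp : IsExposed ℝ KB C₂ := fun _ => ⟨ℓ, rfl⟩
  have hC₁sub : C₁ ⊆ KA := fun x hx => hx.1
  have hC₂sub : C₂ ⊆ KB := fun x hx => hx.1
  obtain ⟨x, hx⟩ := hne
  have hx' := hFsum ▸ hx
  obtain ⟨x₁, hx₁, x₂, hx₂, -⟩ := Set.mem_add.1 hx'
  refine ⟨⇑(resL A) '' C₁, ⇑(resL B) '' C₂, ⟨resL A x₁, ⟨x₁, hx₁, rfl⟩⟩,
    exposed_preimage (extL A) (resL A) (res_ext A) hC₁exp,
    ⟨resL B x₂, ⟨x₂, hx₂, rfl⟩⟩,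
    exposed_preimage (extL B) (resL B) (res_ext B) hC₂exp, ?_⟩
  rw [image_restore (extL A) (resL A) (res_ext A) hC₁sub,
    image_restore (extL B) (resL B) (res_ext B) hC₂sub]
  exact hFsum.symm

lemma card_coe_sort (S : Finset V) : Fintype.card ↥(S : Set V) = S.card := by
  rw [← Fintype.card_coe S]
  exact Fintype.card_congr (Equiv.subtypeEquivRight (fun x => Finset.mem_coe))

lemma face_dim_lt (S : Finset V) (hS : S.Nonempty) (G' : SimpleGraph ↥(S : Set V))
    {F : Set (↥(S : Set V) → ℝ)} (hF : F ⊆ graphicalZonotope G') :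
    Module.finrank ℝ (affineSpan ℝ F).direction < S.card := by
  rw [direction_affineSpan]
  set L : (↥(S : Set V) → ℝ) →ₗ[ℝ] ℝ :=
    { toFun := fun x => ∑ i, x i
      map_add' := by intros; simp [Finset.sum_add_distrib]
      map_smul' := by intros; simp [← Finset.mul_sum] } with hL
  have hface : vectorSpan ℝ F ≤ LinearMap.ker L := by
    refine vectorSpan_le_of_subset _ fun x hx => ?_
    obtain ⟨c, hc, rfl⟩ := mem_gz.1 (hF hx)
    exact LinearMap.mem_ker.2 (sum_zpt_eq_zero hc.1)
  have hne : LinearMap.ker L < ⊤ := by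
    rw [lt_top_iff_ne_top]
    intro htop
    have hL0 : L = 0 := LinearMap.ker_eq_top.1 htop
    have : L (fun _ => (1 : ℝ)) = 0 := by rw [hL0]; rfl
    have hcard : L (fun _ => (1 : ℝ)) = (Fintype.card ↥(S : Set V) : ℝ) := by
      simp [hL]
    rw [hcard] at this
    have hpos : 0 < Fintype.card ↥(S : Set V) := by
      rw [card_coe_sort]
      exact Finset.card_pos.2 hS
    exact_mod_cast absurd this (by positivity)
  calc Module.finrank ℝ (vectorSpan ℝ F) ≤ Module.finrank ℝ (LinearMap.ker L) :=
        Submodule.finrank_mono hface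
    _ < Module.finrank ℝ (↥(S : Set V) → ℝ) := Submodule.finrank_lt hne.ne
    _ = S.card := by
        rw [Module.finrank_pi, card_coe_sort]

lemma faceMap_dim (hI : A ∩ B = {v})
    {F₁ : Set (↥(A : Set V) → ℝ)} {F₂ : Set (↥(B : Set V) → ℝ)}
    (hne₁ : F₁.Nonempty) (hexp₁ : IsExposed ℝ (graphicalZonotope (G.induce (A : Set V))) F₁)
    (hne₂ : F₂.Nonempty) (hexp₂ : IsExposed ℝ (graphicalZonotope (G.induce (B : Set V))) F₂) :
    Module.finrank ℝ (affineSpan ℝ (⇑(extL A) '' F₁ + ⇑(extL B) '' F₂)).direction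
      = Module.finrank ℝ (affineSpan ℝ F₁).direction
        + Module.finrank ℝ (affineSpan ℝ F₂).direction := by
  have h1 : ⇑(extL A) '' F₁ ⊆ (Usub A : Set (V → ℝ)) := fun x hx => by
    obtain ⟨z, hz, rfl⟩ := hx
    exact image_gz_subset_Usub A _ ⟨z, hexp₁.subset hz, rfl⟩
  have h2 : ⇑(extL B) '' F₂ ⊆ (Usub B : Set (V → ℝ)) := fun x hx => by
    obtain ⟨z, hz, rfl⟩ := hx
    exact image_gz_subset_Usub B _ ⟨z, hexp₂.subset hz, rfl⟩
  have hdisj : vectorSpan ℝ (⇑(extL A) '' F₁) ⊓ vectorSpan ℝ (⇑(extL B) '' F₂) = ⊥ := by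
    refine le_bot_iff.1 ?_
    intro x hx
    have hxA : x ∈ Usub A := vectorSpan_le_of_subset _ h1 hx.1
    have hxB : x ∈ Usub B := vectorSpan_le_of_subset _ h2 hx.2
    simpa using Usub_disj hI hxA hxB
  rw [direction_affineSpan, direction_affineSpan, direction_affineSpan]
  rw [finrank_vectorSpan_add (hne₁.image _) (hne₂.image _) hdisj]
  have e1 := finrank_dir_image (extL A) (extL_inj A) F₁
  have e2 := finrank_dir_image (extL B) (extL_inj B) F₂
  rw [direction_affineSpan, direction_affineSpan] at e1 e2
  rw [e1, e2]

open Polynomial in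
lemma sum_pow_eq {S : Type} [Fintype S] (d : S → ℕ) (N : ℕ) (hd : ∀ s, d s < N) :
    ∑ k ∈ Finset.range N, (Nat.card {s : S // d s = k} : Polynomial ℤ) * X ^ k
      = ∑ s : S, (X : Polynomial ℤ) ^ (d s) := by
  classical
  rw [← Finset.sum_fiberwise_of_maps_to (fun s _ => Finset.mem_range.2 (hd s))
    (fun s => (X : Polynomial ℤ) ^ (d s))]
  refine Finset.sum_congr rfl fun k _ => ?_
  have hcard : Nat.card {s : S // d s = k} = (Finset.univ.filter (fun s => d s = k)).card := by
    rw [Nat.card_eq_fintype_card, Fintype.card_subtype]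
  rw [hcard]
  have h2 : ∑ s ∈ Finset.univ.filter (fun s => d s = k), (X : Polynomial ℤ) ^ (d s)
      = ∑ _s ∈ Finset.univ.filter (fun s => d s = k), (X : Polynomial ℤ) ^ k :=
    Finset.sum_congr rfl fun s hs => by rw [(Finset.mem_filter.1 hs).2]
  rw [h2, Finset.sum_const, nsmul_eq_mul]

open Polynomial in
lemma sum_pow_prod {S₁ S₂ : Type} [Fintype S₁] [Fintype S₂] (d₁ : S₁ → ℕ) (d₂ : S₂ → ℕ) :
    ∑ p : S₁ × S₂, (X : Polynomial ℤ) ^ (d₁ p.1 + d₂ p.2)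
      = (∑ s : S₁, (X : Polynomial ℤ) ^ (d₁ s)) * (∑ t : S₂, (X : Polynomial ℤ) ^ (d₂ t)) := by
  rw [Finset.sum_mul_sum, Fintype.sum_prod_type]
  exact Finset.sum_congr rfl fun s _ => Finset.sum_congr rfl fun t _ => (pow_add _ _ _)

end Wedge
end ZonoWedge

namespace ZonoWedge
section Assembly
open Pointwise
variable {W : Type} [Fintype W] [DecidableEq W]

/-- The type of nonempty exposed faces of a set. -/
def FacesType (K : Set (W → ℝ)) : Type :=
  {F : Set (W → ℝ) // F.Nonempty ∧ IsExposed ℝ K F}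

/-- dimension of a face -/
noncomputable def fdim {K : Set (W → ℝ)} (F : FacesType K) : ℕ :=
  Module.finrank ℝ (affineSpan ℝ F.1).direction

lemma facesType_finite (G : SimpleGraph W) : Finite (FacesType (graphicalZonotope G)) :=
  (faces_finite G).to_subtype

end Assembly
end ZonoWedge


namespace ZonoWedge

lemma faceCount_eq {W : Type} [Fintype W] [DecidableEq W] (G : SimpleGraph W) (k : ℕ) :
    faceCount G k = Nat.card {s : FacesType (graphicalZonotope G) // fdim s = k} :=
  Nat.card_congr
    { toFun := fun F => ⟨⟨F.1, F.2.1, F.2.2.1⟩, F.2.2.2⟩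
      invFun := fun s => ⟨s.1.1, s.1.2.1, s.1.2.2, s.2⟩
      left_inv := fun _ => rfl
      right_inv := fun _ => rfl }

end ZonoWedge


open ZonoWedge

/-- The `f`-polynomial of the graphical zonotope of a wedge of two graphs is the product of
the `f`-polynomials of the graphical zonotopes of the two pieces. -/
theorem fPolynomial_graphicalZonotope_wedge
    {V : Type} [Fintype V] [DecidableEq V] (G : SimpleGraph V) (v : V)
    (A B : Finset V) (hU : A ∪ B = Finset.univ) (hI : A ∩ B = {v})
    (hE : ∀ u w, G.Adj u w → (u ∈ A ∧ w ∈ A) ∨ (u ∈ B ∧ w ∈ B))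
    (a b : ℕ) (ha : A.card = a) (hb : B.card = b) (ha1 : 1 ≤ a) (hb1 : 1 ≤ b)
    (hA : (G.induce (A : Set V)).Connected) (hB : (G.induce (B : Set V)).Connected) :
    ∑ k ∈ Finset.range (a + b - 1), (faceCount G k : Polynomial ℤ) * X ^ k
      = (∑ k ∈ Finset.range a,
            (faceCount (G.induce (A : Set V)) k : Polynomial ℤ) * X ^ k) *
        (∑ k ∈ Finset.range b,
            (faceCount (G.induce (B : Set V)) k : Polynomial ℤ) * X ^ k) := by

  classical
  haveI : Finite (FacesType (graphicalZonotope G)) := facesType_finite G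
  haveI : Finite (FacesType (graphicalZonotope (G.induce (A : Set V)))) :=
    facesType_finite _
  haveI : Finite (FacesType (graphicalZonotope (G.induce (B : Set V)))) :=
    facesType_finite _
  haveI : Fintype (FacesType (graphicalZonotope G)) := Fintype.ofFinite _
  haveI : Fintype (FacesType (graphicalZonotope (G.induce (A : Set V)))) := Fintype.ofFinite _
  haveI : Fintype (FacesType (graphicalZonotope (G.induce (B : Set V)))) := Fintype.ofFinite _
  let Φ : FacesType (graphicalZonotope (G.induce (A : Set V)))
      × FacesType (graphicalZonotope (G.induce (B : Set V)))
      → FacesType (graphicalZonotope G) :=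
    fun p => ⟨_, faceMap_wd hI hE p.1.2.1 p.1.2.2 p.2.2.1 p.2.2.2⟩
  have hbij : Function.Bijective Φ := by
    constructor
    · rintro ⟨⟨F₁, hne₁, hexp₁⟩, ⟨F₂, hne₂, hexp₂⟩⟩ ⟨⟨F₁', hne₁', hexp₁'⟩, ⟨F₂', hne₂', hexp₂'⟩⟩ h
      have hsets := congrArg Subtype.val h
      obtain ⟨h1, h2⟩ := faceMap_inj hI hne₁ hexp₁ hne₂ hexp₂ hne₁' hexp₁' hne₂' hexp₂' hsets
      exact Prod.ext (Subtype.ext h1) (Subtype.ext h2)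
    · rintro ⟨F, hne, hexp⟩
      obtain ⟨F₁, F₂, hne₁, hexp₁, hne₂, hexp₂, hsum⟩ := faceMap_surj hI hE hne hexp
      exact ⟨⟨⟨F₁, hne₁, hexp₁⟩, ⟨F₂, hne₂, hexp₂⟩⟩, Subtype.ext hsum⟩
  have hdim : ∀ p, fdim (Φ p) = fdim p.1 + fdim p.2 :=
    fun p => faceMap_dim hI p.1.2.1 p.1.2.2 p.2.2.1 p.2.2.2
  have hd1 : ∀ s : FacesType (graphicalZonotope (G.induce (A : Set V))), fdim s < a := by
    intro s
    have := face_dim_lt A (Finset.card_pos.1 (by omega)) (G.induce (A : Set V)) s.2.2.subset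
    rw [ha] at this
    exact this
  have hd2 : ∀ s : FacesType (graphicalZonotope (G.induce (B : Set V))), fdim s < b := by
    intro s
    have := face_dim_lt B (Finset.card_pos.1 (by omega)) (G.induce (B : Set V)) s.2.2.subset
    rw [hb] at this
    exact this
  have hdS : ∀ s : FacesType (graphicalZonotope G), fdim s < a + b - 1 := by
    intro s
    obtain ⟨p, rfl⟩ := hbij.2 s
    have h1 := hd1 p.1
    have h2 := hd2 p.2
    rw [hdim p]
    omega
  calc ∑ k ∈ Finset.range (a + b - 1), (faceCount G k : Polynomial ℤ) * X ^ k
      = ∑ k ∈ Finset.range (a + b - 1),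
          (Nat.card {s : FacesType (graphicalZonotope G) // fdim s = k} : Polynomial ℤ)
            * X ^ k := by
        refine Finset.sum_congr rfl fun k _ => ?_
        rw [faceCount_eq]
    _ = ∑ s : FacesType (graphicalZonotope G), (X : Polynomial ℤ) ^ (fdim s) :=
        sum_pow_eq _ _ hdS
    _ = ∑ p : FacesType (graphicalZonotope (G.induce (A : Set V)))
          × FacesType (graphicalZonotope (G.induce (B : Set V))),
          (X : Polynomial ℤ) ^ (fdim p.1 + fdim p.2) :=
        (Fintype.sum_bijective Φ hbij _ _ (fun p => by rw [hdim p])).symm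
    _ = (∑ s : FacesType (graphicalZonotope (G.induce (A : Set V))),
          (X : Polynomial ℤ) ^ (fdim s))
        * (∑ t : FacesType (graphicalZonotope (G.induce (B : Set V))),
          (X : Polynomial ℤ) ^ (fdim t)) := sum_pow_prod _ _
    _ = _ := by
        rw [← sum_pow_eq _ a hd1, ← sum_pow_eq _ b hd2]
        refine congrArg₂ (· * ·) ?_ ?_ <;>
          exact Finset.sum_congr rfl fun k _ => by rw [faceCount_eq]
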